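/- arXiv:2108.10703 — 4 statements merged into one kernel-verified Lean document; each statement's English description precedes it below -/
import Mathlib

section
/- Let M be a real m×n matrix of rank k ≥ 1, and let Ω be an n×k random matrix whose entries are independent Gaussian random variables with mean 0 and variance 1. Then, almost surely (with respect to the product Gaussian measure on the entries of Ω), the matrix MΩ has rank k; equivalently, the set of matrices Ω for which the columns of MΩ are linearly dependent has measure zero. -/
open MeasureTheory Matrix

/-! ### Auxiliary lemmas -/

/-- A finite subset of `ℝ` has Gaussian measure zero. -/
lemma gaussFiniteNull {s : Set ℝ} (hs : s.Finite) :
    ProbabilityTheory.gaussianReal 0 1 s = 0 :=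
  ProbabilityTheory.gaussianReal_absolutelyContinuous 0 one_ne_zero
    (hs.measure_zero volume)

lemma measurableSetEvalZero {ι : Type*} [Fintype ι] (p : MvPolynomial ι ℝ) :
    MeasurableSet {x : ι → ℝ | MvPolynomial.eval x p = 0} :=
  (MvPolynomial.continuous_eval (p := p)).measurable (measurableSet_singleton 0)

/-- The zero set of a nonzero multivariate polynomial has measure zero under the
standard Gaussian product measure (variables indexed by `Fin N`). -/
lemma gaussianPiEvalZeroFin :
    ∀ (N : ℕ) (p : MvPolynomial (Fin N) ℝ), p ≠ 0 →
      (Measure.pi fun _ : Fin N => ProbabilityTheory.gaussianReal 0 1)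
        {x | MvPolynomial.eval x p = 0} = 0 := by
  intro N
  induction N with
  | zero =>
    intro p hp
    obtain ⟨r, rfl⟩ := MvPolynomial.C_surjective (Fin 0) p
    have hr : r ≠ 0 := fun h => hp (by simp [h])
    have : {x : Fin 0 → ℝ | MvPolynomial.eval x (MvPolynomial.C r) = 0} = ∅ := by
      ext x; simp [hr]
    rw [this]; simp
  | succ N ih =>
    intro p hp
    set g := ProbabilityTheory.gaussianReal 0 1 with hgdef
    set πN := Measure.pi fun _ : Fin N => g with hπN
    set q := MvPolynomial.finSuccEquiv ℝ N p with hqdef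
    have hq : q ≠ 0 := by
      rw [hqdef]
      intro h
      apply hp
      simpa using congrArg (MvPolynomial.finSuccEquiv ℝ N).symm h
    set c := q.leadingCoeff with hcdef
    have hc0 : c ≠ 0 := Polynomial.leadingCoeff_ne_zero.mpr hq
    set e := MeasurableEquiv.piFinSuccAbove (fun _ : Fin (N + 1) => ℝ) 0 with hedef
    have mp := measurePreserving_piFinSuccAbove
      (fun _ : Fin (N + 1) => g) 0
    have hS : MeasurableSet {x : Fin (N + 1) → ℝ | MvPolynomial.eval x p = 0} :=
      measurableSetEvalZero p
    set T : Set (ℝ × (Fin N → ℝ)) :=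
      e.symm ⁻¹' {x | MvPolynomial.eval x p = 0} with hTdef
    have hTmeas : MeasurableSet T := e.symm.measurable hS
    have hTmem : ∀ a (s : Fin N → ℝ),
        ((a, s) ∈ T ↔ Polynomial.eval a (q.map (MvPolynomial.eval s)) = 0) := by
      intro a s
      have hsymm : (e.symm (a, s)) = Fin.cons a s := by
        show (MeasurableEquiv.piFinSuccAbove (fun _ : Fin (N + 1) => ℝ) 0).symm (a, s)
          = Fin.cons a s
        simp [MeasurableEquiv.piFinSuccAbove, Fin.insertNth_zero']
        rfl
      simp only [hTdef, Set.mem_preimage, Set.mem_setOf_eq, hsymm,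
        MvPolynomial.eval_eq_eval_mv_eval', hqdef]
    have key : (Measure.pi fun _ : Fin (N + 1) => g)
        {x | MvPolynomial.eval x p = 0} = (g.prod πN) T := by
      rw [← mp.map_eq, MeasurableEquiv.map_apply]
      congr 1
      ext x
      simp only [hTdef, hedef, Set.mem_preimage, MeasurableEquiv.symm_apply_apply]
    set C0 : Set (Fin N → ℝ) := {s | MvPolynomial.eval s c = 0} with hC0def
    have hC0 : MeasurableSet C0 := measurableSetEvalZero c
    have hC0null : πN C0 = 0 := ih c hc0
    set T2 := T ∩ (Set.univ ×ˢ C0ᶜ) with hT2def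
    have hT2 : MeasurableSet T2 := hTmeas.inter (MeasurableSet.univ.prod hC0.compl)
    have hsub : T ⊆ (Set.univ ×ˢ C0) ∪ T2 := by
      rintro ⟨a, s⟩ hmem
      by_cases h : s ∈ C0
      · exact Or.inl ⟨trivial, h⟩
      · exact Or.inr ⟨hmem, trivial, h⟩
    have h1 : (g.prod πN) (Set.univ ×ˢ C0) = 0 := by
      rw [Measure.prod_prod, hC0null, mul_zero]
    have h2 : (g.prod πN) T2 = 0 := by
      rw [Measure.prod_apply_symm hT2]
      have hz : ∀ s : Fin N → ℝ, g ((fun a => (a, s)) ⁻¹' T2) = 0 := by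
        intro s
        by_cases h : s ∈ C0
        · have : ((fun a => (a, s)) ⁻¹' T2) = ∅ := by
            ext a
            simp only [hT2def, Set.mem_preimage, Set.mem_inter_iff, Set.mem_prod,
              Set.mem_univ, Set.mem_compl_iff, true_and, Set.mem_empty_iff_false,
              iff_false]
            intro hcontra
            exact hcontra.2 h
          rw [this]; simp
        · apply gaussFiniteNull
          have hmapne : q.map (MvPolynomial.eval s) ≠ 0 := by
            intro hzero
            apply h
            have hco : (q.map (MvPolynomial.eval s)).coeff q.natDegree = 0 := by
              rw [hzero]; simp
            rw [Polynomial.coeff_map] at hco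
            exact hco
          refine (Polynomial.finite_setOf_isRoot hmapne).subset ?_
          intro a ha
          have ha' : (a, s) ∈ T2 := ha
          exact (hTmem a s).mp ha'.1
      calc (∫⁻ s, g ((fun a => (a, s)) ⁻¹' T2) ∂πN) = ∫⁻ _, 0 ∂πN := by
            exact lintegral_congr hz
        _ = 0 := lintegral_zero
    refine le_antisymm ?_ zero_le
    calc (Measure.pi fun _ : Fin (N + 1) => g) {x | MvPolynomial.eval x p = 0}
        = (g.prod πN) T := key
      _ ≤ (g.prod πN) ((Set.univ ×ˢ C0) ∪ T2) := measure_mono hsub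
      _ ≤ (g.prod πN) (Set.univ ×ˢ C0) + (g.prod πN) T2 := measure_union_le _ _
      _ = 0 := by rw [h1, h2, add_zero]

/-- The zero set of a nonzero multivariate polynomial has measure zero under the
standard Gaussian product measure (general finite index type). -/
lemma gaussianPiEvalZero {ι : Type*} [Fintype ι] (p : MvPolynomial ι ℝ) (hp : p ≠ 0) :
    (Measure.pi fun _ : ι => ProbabilityTheory.gaussianReal 0 1)
      {x | MvPolynomial.eval x p = 0} = 0 := by
  classical
  set σ := Fintype.equivFin ι with hσ
  set e := MeasurableEquiv.piCongrLeft (fun _ : ι => ℝ) σ.symm with hedef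
  have mp := measurePreserving_piCongrLeft
    (fun _ : ι => ProbabilityTheory.gaussianReal 0 1) σ.symm
  have hS : MeasurableSet {x : ι → ℝ | MvPolynomial.eval x p = 0} :=
    measurableSetEvalZero p
  rw [← mp.map_eq, MeasurableEquiv.map_apply]
  have hpre : e ⁻¹' {x : ι → ℝ | MvPolynomial.eval x p = 0}
      = {y : Fin (Fintype.card ι) → ℝ |
          MvPolynomial.eval y (MvPolynomial.rename σ p) = 0} := by
    ext y
    have he : (e y : ι → ℝ) = y ∘ σ := by
      funext i
      have h1 := Equiv.piCongrLeft_apply_apply (fun _ : ι => ℝ) σ.symm y (σ i)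
      rw [Equiv.symm_apply_apply] at h1
      have h2 : (e y : ι → ℝ) i
          = Equiv.piCongrLeft (fun _ : ι => ℝ) σ.symm y i := by
        rw [hedef, MeasurableEquiv.coe_piCongrLeft]
      rw [h2, h1]
      rfl
    simp only [Set.mem_preimage, Set.mem_setOf_eq, he, MvPolynomial.eval_rename]
  rw [hpre]
  exact gaussianPiEvalZeroFin _ _
    ((map_ne_zero_iff _ (MvPolynomial.rename_injective _ σ.injective)).mpr hp)

/-- The `uncurry` map pushes the doubly-indexed Gaussian product measure to the
product-indexed Gaussian product measure. -/
lemma mapUncurryPi (n k : ℕ) :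
    Measure.map (fun (Ω : Fin n → Fin k → ℝ) (p : Fin n × Fin k) => Ω p.1 p.2)
      (Measure.pi fun _ : Fin n => Measure.pi fun _ : Fin k =>
        ProbabilityTheory.gaussianReal 0 1)
      = Measure.pi fun _ : Fin n × Fin k => ProbabilityTheory.gaussianReal 0 1 := by
  have hmeas : Measurable
      (fun (Ω : Fin n → Fin k → ℝ) (p : Fin n × Fin k) => Ω p.1 p.2) :=
    measurable_pi_lambda _ fun p =>
      (measurable_pi_apply p.2).comp (measurable_pi_apply p.1)
  refine (Measure.pi_eq fun s hs => ?_).symm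
  rw [Measure.map_apply hmeas (MeasurableSet.univ_pi hs)]
  have hpre : (fun (Ω : Fin n → Fin k → ℝ) (p : Fin n × Fin k) => Ω p.1 p.2) ⁻¹'
        Set.pi Set.univ s
      = Set.pi Set.univ fun i => Set.pi Set.univ fun j => s (i, j) := by
    ext Ω
    simp only [Set.mem_preimage, Set.mem_pi, Set.mem_univ, true_implies]
    exact ⟨fun h i j => h (i, j), fun h p => h p.1 p.2⟩
  rw [hpre, Measure.pi_pi]
  simp_rw [Measure.pi_pi]
  exact (Fintype.prod_prod_type fun p : Fin n × Fin k =>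
    ProbabilityTheory.gaussianReal 0 1 (s p)).symm

/-- A square real matrix of full rank has invertible determinant. -/
lemma isUnitDetOfRank {k : ℕ} (B : Matrix (Fin k) (Fin k) ℝ) (hB : B.rank = k) :
    IsUnit B.det := by
  have hfr : Module.finrank ℝ (LinearMap.range B.mulVecLin) = k := hB
  have h1 : LinearMap.range B.mulVecLin = ⊤ :=
    Submodule.eq_top_of_finrank_eq (hfr.trans (Module.finrank_fin_fun ℝ).symm)
  have hsurj : Function.Surjective B.mulVec := by
    intro v
    obtain ⟨u, hu⟩ := LinearMap.range_eq_top.mp h1 v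
    exact ⟨u, hu⟩
  exact (Matrix.isUnit_iff_isUnit_det B).mp
    (Matrix.mulVec_surjective_iff_isUnit.mp hsurj)

/-- If `M` has rank `k` there is an `n × k` matrix `Ω₀` with `rank (M * Ω₀) = k`. -/
lemma existsFullRankOmega {m n k : ℕ} (M : Matrix (Fin m) (Fin n) ℝ)
    (hM : M.rank = k) :
    ∃ Ω₀ : Matrix (Fin n) (Fin k) ℝ, (M * Ω₀).rank = k := by
  have hfr : Module.finrank ℝ (LinearMap.range M.mulVecLin) = k := hM
  have e : (Fin k → ℝ) ≃ₗ[ℝ] LinearMap.range M.mulVecLin :=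
    LinearEquiv.ofFinrankEq _ _ ((Module.finrank_fin_fun ℝ).trans hfr.symm)
  obtain ⟨g, hg⟩ := (M.mulVecLin.rangeRestrict).exists_rightInverse_of_surjective
    (LinearMap.range_eq_top.mpr M.mulVecLin.surjective_rangeRestrict)
  set h : (Fin k → ℝ) →ₗ[ℝ] (Fin n → ℝ) :=
    g ∘ₗ (e : (Fin k → ℝ) →ₗ[ℝ] LinearMap.range M.mulVecLin) with hhdef
  have keyeq : ∀ x, M.mulVecLin (h x) = ((e x : LinearMap.range M.mulVecLin) : Fin m → ℝ) := by
    intro x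
    have h1 := LinearMap.ext_iff.mp hg (e x)
    have h2 := congrArg (Subtype.val) h1
    simpa [hhdef] using h2
  have hinj : Function.Injective (M.mulVecLin ∘ₗ h) := by
    intro x y hxy
    simp only [LinearMap.comp_apply] at hxy
    rw [keyeq x, keyeq y] at hxy
    exact e.injective (Subtype.ext hxy)
  refine ⟨LinearMap.toMatrix' h, ?_⟩
  have hcomp : (M * LinearMap.toMatrix' h).mulVecLin = M.mulVecLin ∘ₗ h := by
    rw [Matrix.mulVecLin_mul]
    congr 1
    rw [← Matrix.toLin'_apply', Matrix.toLin'_toMatrix']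
  show Module.finrank ℝ (LinearMap.range (M * LinearMap.toMatrix' h).mulVecLin) = k
  rw [hcomp, LinearMap.finrank_range_of_inj hinj]
  exact Module.finrank_fin_fun ℝ

/-- The polynomial `det ((M X)ᵀ (M X))` in the entries of `X`. -/
noncomputable def detPoly {m n : ℕ} (k : ℕ) (M : Matrix (Fin m) (Fin n) ℝ) :
    MvPolynomial (Fin n × Fin k) ℝ :=
  Matrix.det ((M.map MvPolynomial.C * Matrix.of fun (i : Fin n) (j : Fin k) => (MvPolynomial.X (i, j) : MvPolynomial (Fin n × Fin k) ℝ) : Matrix (Fin m) (Fin k) (MvPolynomial (Fin n × Fin k) ℝ))ᵀ *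
    (M.map MvPolynomial.C * Matrix.of fun (i : Fin n) (j : Fin k) => (MvPolynomial.X (i, j) : MvPolynomial (Fin n × Fin k) ℝ) : Matrix (Fin m) (Fin k) (MvPolynomial (Fin n × Fin k) ℝ)))

lemma evalDetPoly {m n k : ℕ} (M : Matrix (Fin m) (Fin n) ℝ)
    (Ω : Fin n → Fin k → ℝ) :
    MvPolynomial.eval (fun p : Fin n × Fin k => Ω p.1 p.2) (detPoly k M)
      = ((M * Matrix.of Ω)ᵀ * (M * Matrix.of Ω)).det := by
  set φ : MvPolynomial (Fin n × Fin k) ℝ →+* ℝ :=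
    (MvPolynomial.eval fun p : Fin n × Fin k => Ω p.1 p.2 : _ →+* ℝ) with hφ
  have hA : (M.map MvPolynomial.C *
        Matrix.of fun (i : Fin n) (j : Fin k) => (MvPolynomial.X (i, j) : MvPolynomial (Fin n × Fin k) ℝ) : Matrix (Fin m) (Fin k) (MvPolynomial (Fin n × Fin k) ℝ)).map φ = M * Matrix.of Ω := by
    erw [Matrix.map_mul]
    congr 1
    · ext i j
      simp [hφ, Matrix.map_apply]
    · ext i j
      simp [hφ, Matrix.map_apply]
  show φ _ = _
  rw [detPoly, RingHom.map_det, RingHom.mapMatrix_apply, Matrix.map_mul, Matrix.transpose_map, hA]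

/-- If `M` is a real `m × n` matrix of rank `k ≥ 1` and `Ω` is an `n × k` matrix with
independent standard Gaussian entries, then almost surely `M * Ω` has rank `k`: the set of
`Ω` for which the columns of `M * Ω` are linearly dependent has measure zero. -/
theorem gaussian_sample_full_rank_ae
    (m n k : ℕ) (hk : 1 ≤ k)
    (M : Matrix (Fin m) (Fin n) ℝ) (hM : M.rank = k)
    -- `μ` is the law of an `n × k` matrix with independent `N(0, 1)` entries
    (μ : Measure (Fin n → Fin k → ℝ))
    (hμ : μ = Measure.pi fun _ => Measure.pi fun _ =>
      ProbabilityTheory.gaussianReal 0 1) :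
    μ {Ω | (M * Matrix.of Ω).rank ≠ k} = 0 := by
  subst hμ
  obtain ⟨Ω₀, hΩ₀⟩ := existsFullRankOmega M hM
  have hdet₀ : ((M * Ω₀)ᵀ * (M * Ω₀)).det ≠ 0 := by
    have hr : ((M * Ω₀)ᵀ * (M * Ω₀)).rank = k := by
      rw [Matrix.rank_transpose_mul_self]; exact hΩ₀
    intro h0
    have hu := isUnitDetOfRank _ hr
    rw [h0] at hu
    exact not_isUnit_zero hu
  have hP : detPoly k M ≠ 0 := by
    intro h0
    have heval := evalDetPoly M (fun i j => Ω₀ i j)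
    rw [h0] at heval
    simp only [map_zero] at heval
    have : (Matrix.of fun i j => Ω₀ i j) = Ω₀ := rfl
    rw [this] at heval
    exact hdet₀ heval.symm
  have hsub : {Ω : Fin n → Fin k → ℝ | (M * Matrix.of Ω).rank ≠ k}
      ⊆ {Ω : Fin n → Fin k → ℝ |
          MvPolynomial.eval (fun p : Fin n × Fin k => Ω p.1 p.2) (detPoly k M) = 0} := by
    intro Ω hΩ
    by_contra hne
    apply hΩ
    rw [Set.mem_setOf_eq, evalDetPoly] at hne
    have hu : IsUnit ((M * Matrix.of Ω)ᵀ * (M * Matrix.of Ω)) :=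
      (Matrix.isUnit_iff_isUnit_det _).mpr (isUnit_iff_ne_zero.mpr hne)
    show (M * Matrix.of Ω).rank = k
    calc (M * Matrix.of Ω).rank
        = ((M * Matrix.of Ω)ᵀ * (M * Matrix.of Ω)).rank :=
          (Matrix.rank_transpose_mul_self _).symm
      _ = k := by rw [Matrix.rank_of_isUnit _ hu, Fintype.card_fin]
  refine measure_mono_null hsub ?_
  have hmeasΨ : Measurable
      (fun (Ω : Fin n → Fin k → ℝ) (p : Fin n × Fin k) => Ω p.1 p.2) :=
    measurable_pi_lambda _ fun p =>
      (measurable_pi_apply p.2).comp (measurable_pi_apply p.1)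
  have hgoal : (Measure.pi fun _ : Fin n => Measure.pi fun _ : Fin k =>
        ProbabilityTheory.gaussianReal 0 1)
      ((fun (Ω : Fin n → Fin k → ℝ) (p : Fin n × Fin k) => Ω p.1 p.2) ⁻¹'
        {x : Fin n × Fin k → ℝ | MvPolynomial.eval x (detPoly k M) = 0}) = 0 := by
    rw [← Measure.map_apply hmeasΨ (measurableSetEvalZero _), mapUncurryPi n k]
    exact gaussianPiEvalZero _ hP
  exact hgoal
end

section
/- Let M be a real n×n matrix with singular values σ₁ ≥ σ₂ ≥ ⋯ ≥ σ_n, and let 1 ≤ k ≤ n. Then for every real n×n matrix B with rank B ≤ k, ‖M − B‖_F² ≥ Σ_{j>k} σ_j²; moreover this lower bound is attained, i.e., there exists a matrix B of rank at most k with ‖M − B‖_F² = Σ_{j>k} σ_j² (the rank-k truncated singular value decomposition of M). Hence the optimal rank-k Frobenius approximation error of M equals (Σ_{j>k} σ_j²)^{1/2}. -/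
open Matrix

/-- The Frobenius norm of a real matrix: `‖A‖_F = (∑ i, ∑ j, A i j ^ 2) ^ (1/2)`. -/
noncomputable def frobNorm {a b : Type*} [Fintype a] [Fintype b] (A : Matrix a b ℝ) : ℝ :=
  Real.sqrt (∑ i, ∑ j, A i j ^ 2)

namespace EckartYoungAux

open Finset

lemma dot_sum {n : ℕ} {ι : Type*} [Fintype ι] (u : Fin n → ℝ) (f : ι → (Fin n → ℝ)) :
    dotProduct u (∑ i, f i) = ∑ i, dotProduct u (f i) := by
  simp only [dotProduct, Finset.sum_apply, Finset.mul_sum]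
  exact Finset.sum_comm

lemma sum_dot {n : ℕ} {ι : Type*} [Fintype ι] (u : Fin n → ℝ) (f : ι → (Fin n → ℝ)) :
    dotProduct (∑ i, f i) u = ∑ i, dotProduct (f i) u := by
  simp only [dotProduct, Finset.sum_apply, Finset.sum_mul]
  exact Finset.sum_comm

/-- Bessel's inequality for a finite orthonormal family, in dot-product form. -/
lemma bessel_dot {n m : ℕ} (w : Fin m → (Fin n → ℝ))
    (hw : ∀ i j, dotProduct (w i) (w j) = if i = j then 1 else 0)
    (x : Fin n → ℝ) : ∑ i, (dotProduct (w i) x)^2 ≤ dotProduct x x := by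
  set c : Fin m → ℝ := fun i => dotProduct (w i) x with hc
  have h0 : 0 ≤ dotProduct (x - ∑ i, c i • w i) (x - ∑ i, c i • w i) :=
    Finset.sum_nonneg fun j _ => mul_self_nonneg _
  have h1 : dotProduct x (∑ i, c i • w i) = ∑ i, c i ^ 2 := by
    rw [dot_sum]
    refine Finset.sum_congr rfl fun i _ => ?_
    rw [dotProduct_smul, smul_eq_mul, dotProduct_comm, sq]
  have h2 : dotProduct (∑ i, c i • w i) x = ∑ i, c i ^ 2 := by
    rw [dotProduct_comm]; exact h1
  have h3 : dotProduct (∑ i, c i • w i) (∑ i, c i • w i) = ∑ i, c i ^ 2 := by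
    rw [sum_dot]
    refine (Finset.sum_congr rfl fun i _ => ?_)
    rw [smul_dotProduct, dot_sum]
    simp only [dotProduct_smul, hw, smul_eq_mul, mul_ite, mul_one, mul_zero,
      Finset.sum_ite_eq, Finset.mem_univ, if_true, sq]
  have hexp : dotProduct (x - ∑ i, c i • w i) (x - ∑ i, c i • w i)
      = dotProduct x x - ∑ i, c i ^ 2 := by
    rw [sub_dotProduct, dotProduct_sub, dotProduct_sub, h1, h2, h3]
    ring
  rw [hexp] at h0
  simpa using h0

lemma inner_eq_dot {n : ℕ} (x y : EuclideanSpace ℝ (Fin n)) :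
    (inner ℝ x y : ℝ)
      = dotProduct ((WithLp.equiv 2 (Fin n → ℝ)) x) ((WithLp.equiv 2 (Fin n → ℝ)) y) := by
  simp [PiLp.inner_apply, dotProduct, RCLike.inner_apply, conj_trivial]
  exact Finset.sum_congr rfl fun _ _ => mul_comm _ _

/-- Parseval (polarized) for an orthonormal basis of Euclidean space, dot-product form. -/
lemma parseval_dot {n : ℕ} (b : OrthonormalBasis (Fin n) ℝ (EuclideanSpace ℝ (Fin n)))
    (x y : Fin n → ℝ) :
    ∑ j, (dotProduct ((WithLp.equiv 2 (Fin n → ℝ)) (b j)) x)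
       * (dotProduct ((WithLp.equiv 2 (Fin n → ℝ)) (b j)) y) = dotProduct x y := by
  have key := b.sum_inner_mul_inner ((WithLp.equiv 2 (Fin n → ℝ)).symm x)
    ((WithLp.equiv 2 (Fin n → ℝ)).symm y)
  rw [inner_eq_dot] at key
  simp only [Equiv.apply_symm_apply] at key
  rw [← key]
  refine Finset.sum_congr rfl fun j _ => ?_
  have e1 : (inner ℝ ((WithLp.equiv 2 (Fin n → ℝ)).symm x) (b j) : ℝ)
      = dotProduct ((WithLp.equiv 2 (Fin n → ℝ)) (b j)) x := by
    rw [real_inner_comm, inner_eq_dot]; simp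
  have e2 : (inner ℝ (b j) ((WithLp.equiv 2 (Fin n → ℝ)).symm y) : ℝ)
      = dotProduct ((WithLp.equiv 2 (Fin n → ℝ)) (b j)) y := by
    rw [inner_eq_dot]; simp
  rw [e1, e2]

lemma card_filter_ge (n k : ℕ) :
    (Finset.univ.filter (fun j : Fin n => k ≤ (j:ℕ))).card = n - k := by
  rw [Finset.card_filter, Fin.sum_univ_eq_sum_range (fun i => if k ≤ i then 1 else 0),
    ← Finset.card_filter, Finset.range_eq_Ico, Finset.Ico_filter_le, Nat.card_Ico]
  simp

/-- The rearrangement-style inequality: for antitone nonnegative `s` and weights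
`t ∈ [0,1]` summing to `n - k`, the weighted sum dominates the tail sum. -/
lemma key_ineq {n k : ℕ} (s t : Fin n → ℝ) (hs : Antitone s)
    (hs0 : ∀ j, 0 ≤ s j) (ht0 : ∀ j, 0 ≤ t j) (ht1 : ∀ j, t j ≤ 1)
    (hts : ∑ j, t j = ((n - k : ℕ) : ℝ)) :
    (∑ j : Fin n, if k ≤ (j:ℕ) then s j else 0) ≤ ∑ j, s j * t j := by
  classical
  by_cases hkn : k < n
  · set S : Finset (Fin n) := Finset.univ.filter (fun j => k ≤ (j:ℕ)) with hS
    set c : ℝ := s ⟨k, hkn⟩ with hc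
    have hsplit : (∑ j : Fin n, if k ≤ (j:ℕ) then s j else 0) = ∑ j ∈ S, s j := by
      rw [Finset.sum_filter]
    have hsc : ∀ j ∈ S, s j ≤ c := fun j hj =>
      hs (by simpa [Fin.le_def] using (Finset.mem_filter.mp hj).2)
    have hcs : ∀ j ∈ Sᶜ, c ≤ s j := by
      intro j hj
      have : (j : ℕ) < k := by
        have := Finset.mem_compl.mp hj
        simp [hS] at this
        omega
      exact hs (by simp [Fin.le_def]; omega)
    have hcard : (S.card : ℝ) = ((n - k : ℕ) : ℝ) := by rw [hS, card_filter_ge]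
    have h1 : ∑ j ∈ S, s j ≤ ∑ j ∈ S, (s j * t j + c * (1 - t j)) := by
      refine Finset.sum_le_sum fun j hj => ?_
      have : s j = s j * t j + s j * (1 - t j) := by ring
      rw [this]
      have := mul_le_mul_of_nonneg_right (hsc j hj) (by linarith [ht1 j] : (0:ℝ) ≤ 1 - t j)
      linarith
    have h2 : ∑ j ∈ S, (s j * t j + c * (1 - t j))
        = ∑ j ∈ S, s j * t j + c * (S.card - ∑ j ∈ S, t j) := by
      rw [Finset.sum_add_distrib]
      congr 1
      rw [← Finset.mul_sum, Finset.sum_sub_distrib, Finset.sum_const, nsmul_eq_mul, mul_one]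
    have hsum_split : ∑ j ∈ S, t j + ∑ j ∈ Sᶜ, t j = ((n-k:ℕ):ℝ) := by
      rw [Finset.sum_add_sum_compl]; exact hts
    have h3 : (S.card : ℝ) - ∑ j ∈ S, t j = ∑ j ∈ Sᶜ, t j := by
      rw [hcard]; linarith
    have h4 : c * ∑ j ∈ Sᶜ, t j ≤ ∑ j ∈ Sᶜ, s j * t j := by
      rw [Finset.mul_sum]
      exact Finset.sum_le_sum fun j hj => mul_le_mul_of_nonneg_right (hcs j hj) (ht0 j)
    have h5 : ∑ j ∈ S, s j * t j + ∑ j ∈ Sᶜ, s j * t j = ∑ j, s j * t j :=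
      Finset.sum_add_sum_compl S _
    rw [hsplit]
    calc ∑ j ∈ S, s j ≤ ∑ j ∈ S, s j * t j + c * (S.card - ∑ j ∈ S, t j) := by
          rw [← h2]; exact h1
      _ = ∑ j ∈ S, s j * t j + c * ∑ j ∈ Sᶜ, t j := by rw [h3]
      _ ≤ ∑ j ∈ S, s j * t j + ∑ j ∈ Sᶜ, s j * t j := by linarith
      _ = ∑ j, s j * t j := h5
  · have hz : ∀ j : Fin n, ¬ (k ≤ (j:ℕ)) := fun j => by have := j.isLt; omega
    have : (∑ j : Fin n, if k ≤ (j:ℕ) then s j else 0) = 0 :=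
      Finset.sum_eq_zero fun j _ => by rw [if_neg (hz j)]
    rw [this]
    exact Finset.sum_nonneg fun j _ => mul_nonneg (hs0 j) (ht0 j)

end EckartYoungAux

/-- Eckart–Young: if `σ₁ ≥ ⋯ ≥ σ_n` are the singular values of the real `n × n` matrix `M`
and `1 ≤ k ≤ n`, then every `B` with `rank B ≤ k` satisfies
`‖M − B‖_F² ≥ ∑_{j>k} σ_j²`, and this bound is attained by some `B` of rank at most `k`
(the rank-`k` truncated SVD of `M`). -/
theorem eckart_young_frobenius
    (n k : ℕ) (hk1 : 1 ≤ k) (hkn : k ≤ n)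
    (M : Matrix (Fin n) (Fin n) ℝ)
    -- `σ` lists the singular values of `M` (square roots of the eigenvalues of `MᵀM`)
    -- arranged in decreasing order
    (σ : Fin n → ℝ) (hσ : Antitone σ) (e : Fin n ≃ Fin n)
    (hσval : ∀ j, σ j =
      Real.sqrt ((Matrix.isHermitian_conjTranspose_mul_self M).eigenvalues (e j))) :
    (∀ B : Matrix (Fin n) (Fin n) ℝ, B.rank ≤ k →
      (∑ j : Fin n, if k ≤ (j : ℕ) then σ j ^ 2 else 0) ≤ frobNorm (M - B) ^ 2) ∧
    (∃ B : Matrix (Fin n) (Fin n) ℝ, B.rank ≤ k ∧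
      frobNorm (M - B) ^ 2 = ∑ j : Fin n, if k ≤ (j : ℕ) then σ j ^ 2 else 0) := by
  classical
  open EckartYoungAux in
  have hA := Matrix.isHermitian_conjTranspose_mul_self M
  set lam : Fin n → ℝ := hA.eigenvalues with hlamdef
  set v : Fin n → (Fin n → ℝ) :=
    fun j => (WithLp.equiv 2 (Fin n → ℝ)) (hA.eigenvectorBasis j) with hv
  have hAv : ∀ j, (Mᴴ * M) *ᵥ v j = lam j • v j := fun j =>
    hA.mulVec_eigenvectorBasis j
  have vON : ∀ i j, dotProduct (v i) (v j) = if i = j then 1 else 0 := by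
    intro i j
    rw [hv, ← EckartYoungAux.inner_eq_dot]
    exact orthonormal_iff_ite.mp hA.eigenvectorBasis.orthonormal i j
  have hlam0 : ∀ j, 0 ≤ lam j := fun j =>
    (Matrix.posSemidef_conjTranspose_mul_self M).eigenvalues_nonneg j
  have hσ0 : ∀ j, 0 ≤ σ j := fun j => (hσval j) ▸ Real.sqrt_nonneg _
  have hσsq : ∀ j, σ j ^ 2 = lam (e j) := fun j => by
    rw [hσval j, Real.sq_sqrt (hlam0 (e j))]
  have hsym : (Mᴴ * M)ᵀ = Mᴴ * M := by
    rw [← Matrix.conjTranspose_eq_transpose_of_trivial]; exact hA.eq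
  have hsymm : ∀ x y : Fin n → ℝ,
      dotProduct ((Mᴴ * M) *ᵥ x) y = dotProduct x ((Mᴴ * M) *ᵥ y) := by
    intro x y
    rw [Matrix.dotProduct_mulVec, ← Matrix.vecMul_transpose, hsym]
  have hMx : ∀ x : Fin n → ℝ,
      dotProduct (M *ᵥ x) (M *ᵥ x) = dotProduct x ((Mᴴ * M) *ᵥ x) := by
    intro x
    rw [← Matrix.mulVec_mulVec, Matrix.dotProduct_mulVec x,
      Matrix.conjTranspose_eq_transpose_of_trivial, Matrix.vecMul_transpose]
  have parseval : ∀ x y : Fin n → ℝ,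
      ∑ j, (dotProduct (v j) x) * (dotProduct (v j) y) = dotProduct x y := fun x y =>
    EckartYoungAux.parseval_dot hA.eigenvectorBasis x y
  have quad : ∀ x : Fin n → ℝ,
      dotProduct x ((Mᴴ * M) *ᵥ x) = ∑ j, lam j * (dotProduct (v j) x)^2 := by
    intro x
    rw [← parseval x ((Mᴴ * M) *ᵥ x)]
    refine Finset.sum_congr rfl fun j _ => ?_
    rw [← hsymm (v j) x, hAv j, smul_dotProduct, smul_eq_mul]
    ring
  have frob_sq : ∀ C : Matrix (Fin n) (Fin n) ℝ,
      frobNorm C ^ 2 = ∑ r, dotProduct (C r) (C r) := by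
    intro C
    rw [frobNorm, Real.sq_sqrt (Finset.sum_nonneg fun i _ =>
      Finset.sum_nonneg fun j _ => sq_nonneg (C i j) : (0:ℝ) ≤ ∑ i, ∑ j, C i j ^ 2)]
    exact Finset.sum_congr rfl fun r _ => by simp [dotProduct, sq]
  have mulVec_dot : ∀ (C : Matrix (Fin n) (Fin n) ℝ) (x : Fin n → ℝ),
      dotProduct (C *ᵥ x) (C *ᵥ x) = ∑ r, (dotProduct (C r) x)^2 := by
    intro C x
    simp [dotProduct, Matrix.mulVec, sq]
  constructor
  · -- lower bound
    intro B hB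
    set m := n - k with hm
    have hrank : B.rank + Module.finrank ℝ (LinearMap.ker B.mulVecLin) = n := by
      have h := LinearMap.finrank_range_add_finrank_ker B.mulVecLin
      rw [Module.finrank_fin_fun] at h
      exact h
    have hker : m ≤ Module.finrank ℝ (LinearMap.ker B.mulVecLin) := by omega
    set L : EuclideanSpace ℝ (Fin n) ≃ₗ[ℝ] (Fin n → ℝ) :=
      WithLp.linearEquiv 2 ℝ (Fin n → ℝ) with hL
    set K : Submodule ℝ (EuclideanSpace ℝ (Fin n)) :=
      (LinearMap.ker B.mulVecLin).comap
        (L : EuclideanSpace ℝ (Fin n) →ₗ[ℝ] (Fin n → ℝ)) with hK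
    have hKfin : Module.finrank ℝ K = Module.finrank ℝ (LinearMap.ker B.mulVecLin) :=
      (LinearEquiv.ofSubmodule' L (LinearMap.ker B.mulVecLin)).finrank_eq
    have hKm : m ≤ Module.finrank ℝ K := hKfin ▸ hker
    set ob := stdOrthonormalBasis ℝ K with hob
    set w : Fin m → EuclideanSpace ℝ (Fin n) :=
      fun i => ((ob (Fin.castLE hKm i) : K) : EuclideanSpace ℝ (Fin n)) with hw
    set W : Fin m → (Fin n → ℝ) := fun i => L (w i) with hW
    have hWker : ∀ i, B *ᵥ W i = 0 := by
      intro i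
      have hmem : w i ∈ K := (ob (Fin.castLE hKm i)).2
      have : B.mulVecLin (L (w i)) = 0 := hmem
      simpa [Matrix.mulVecLin_apply] using this
    have hWON : ∀ i j, dotProduct (W i) (W j) = if i = j then 1 else 0 := by
      intro i j
      have h1 : (inner ℝ (w i) (w j) : ℝ)
          = if Fin.castLE hKm i = Fin.castLE hKm j then 1 else 0 := by
        rw [hw, ← Submodule.coe_inner]
        exact orthonormal_iff_ite.mp ob.orthonormal _ _
      have h2 : (if Fin.castLE hKm i = Fin.castLE hKm j then (1:ℝ) else 0)
          = if i = j then 1 else 0 := by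
        by_cases h : i = j
        · subst h; simp
        · rw [if_neg h, if_neg (by simpa [Fin.ext_iff] using h)]
      rw [h2] at h1
      rw [← h1, EckartYoungAux.inner_eq_dot]
      rfl
    -- the weights
    set t : Fin n → ℝ := fun j => ∑ i : Fin m, (dotProduct (v j) (W i))^2 with ht
    have hstep1 : ∑ i : Fin m, dotProduct (M *ᵥ W i) (M *ᵥ W i) = ∑ j, lam j * t j := by
      have hq : ∀ i, dotProduct (M *ᵥ W i) (M *ᵥ W i)
          = ∑ j, lam j * (dotProduct (v j) (W i))^2 := fun i => by rw [hMx, quad]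
      rw [Finset.sum_congr rfl fun i _ => hq i, Finset.sum_comm]
      exact Finset.sum_congr rfl fun j _ => by rw [ht, Finset.mul_sum]
    have hMW : ∀ i, M *ᵥ W i = (M - B) *ᵥ W i := fun i => by
      rw [Matrix.sub_mulVec, hWker i, sub_zero]
    have hstep2 : ∑ i : Fin m, dotProduct (M *ᵥ W i) (M *ᵥ W i) ≤ frobNorm (M - B)^2 := by
      rw [frob_sq]
      calc ∑ i : Fin m, dotProduct (M *ᵥ W i) (M *ᵥ W i)
          = ∑ i : Fin m, ∑ r, (dotProduct ((M - B) r) (W i))^2 := by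
            refine Finset.sum_congr rfl fun i _ => ?_
            rw [hMW i, mulVec_dot]
        _ = ∑ r, ∑ i : Fin m, (dotProduct (W i) ((M - B) r))^2 := by
            rw [Finset.sum_comm]
            exact Finset.sum_congr rfl fun r _ => Finset.sum_congr rfl fun i _ => by
              rw [dotProduct_comm]
        _ ≤ ∑ r, dotProduct ((M - B) r) ((M - B) r) :=
            Finset.sum_le_sum fun r _ => EckartYoungAux.bessel_dot W hWON ((M - B) r)
    have ht0 : ∀ j, 0 ≤ t j := fun j => Finset.sum_nonneg fun i _ => sq_nonneg _
    have ht1 : ∀ j, t j ≤ 1 := by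
      intro j
      have hb := EckartYoungAux.bessel_dot W hWON (v j)
      have h11 : dotProduct (v j) (v j) = 1 := by rw [vON]; simp
      rw [h11] at hb
      calc t j = ∑ i, (dotProduct (W i) (v j))^2 := Finset.sum_congr rfl fun i _ => by
            rw [dotProduct_comm]
        _ ≤ 1 := hb
    have htsum : ∑ j, t j = ((n - k : ℕ) : ℝ) := by
      have hcomm : ∑ j, t j = ∑ i : Fin m, ∑ j, (dotProduct (v j) (W i))^2 := Finset.sum_comm
      rw [hcomm]
      have hone : ∀ i : Fin m, ∑ j, (dotProduct (v j) (W i))^2 = 1 := by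
        intro i
        have hp := parseval (W i) (W i)
        rw [hWON i i, if_pos rfl] at hp
        rw [← hp]
        exact Finset.sum_congr rfl fun j _ => sq _
      rw [Finset.sum_congr rfl fun i _ => hone i, Finset.sum_const, Finset.card_univ,
        Fintype.card_fin, nsmul_eq_mul, mul_one, hm]
    have hfinal : (∑ j : Fin n, if k ≤ (j:ℕ) then σ j ^2 else 0) ≤ ∑ j, lam j * t j := by
      have hre : ∑ j, lam j * t j = ∑ j, (σ j ^ 2) * t (e j) := by
        rw [← Equiv.sum_comp e (fun j => lam j * t j)]
        exact Finset.sum_congr rfl fun j _ => by rw [hσsq j]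
      rw [hre]
      refine EckartYoungAux.key_ineq (fun j => σ j ^2) (fun j => t (e j)) ?_ ?_ ?_ ?_ ?_
      · exact fun i j hij => pow_le_pow_left₀ (hσ0 j) (hσ hij) 2
      · exact fun j => sq_nonneg _
      · exact fun j => ht0 _
      · exact fun j => ht1 _
      · rw [Equiv.sum_comp e t, htsum]
    linarith [hstep1, hstep2, hfinal]
  · -- attainment
    set u : Fin n → (Fin n → ℝ) := fun j => v (e j) with hu
    have huON : ∀ i j, dotProduct (u i) (u j) = if i = j then 1 else 0 := by
      intro i j
      rw [hu]
      rw [vON (e i) (e j)]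
      by_cases h : i = j
      · subst h; simp
      · rw [if_neg (fun hh => h (e.injective hh)), if_neg h]
    set V : Matrix (Fin n) (Fin k) ℝ := Matrix.of (fun i j => u (Fin.castLE hkn j) i) with hV
    refine ⟨M * V * Vᵀ, ?_, ?_⟩
    · calc (M * V * Vᵀ).rank ≤ (M * V).rank := Matrix.rank_mul_le_left _ _
        _ ≤ Fintype.card (Fin k) := Matrix.rank_le_card_width _
        _ = k := Fintype.card_fin k
    · have hVt : ∀ j, Vᵀ *ᵥ u j
          = fun i : Fin k => if Fin.castLE hkn i = j then (1:ℝ) else 0 := by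
        intro j
        funext i
        have h1 : (Vᵀ *ᵥ u j) i = dotProduct (u (Fin.castLE hkn i)) (u j) := rfl
        rw [h1, huON]
      have hBu : ∀ j, (M * V * Vᵀ) *ᵥ u j = if k ≤ (j:ℕ) then 0 else M *ᵥ u j := by
        intro j
        rw [← Matrix.mulVec_mulVec, hVt j, ← Matrix.mulVec_mulVec]
        by_cases h : k ≤ (j:ℕ)
        · rw [if_pos h]
          have hz : (fun i : Fin k => if Fin.castLE hkn i = j then (1:ℝ) else 0) = 0 := by
            funext i
            rw [if_neg]
            · rfl
            · intro hh
              have hval : (i:ℕ) = (j:ℕ) := congrArg Fin.val hh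
              have := i.isLt
              omega
          rw [hz, Matrix.mulVec_zero, Matrix.mulVec_zero]
        · rw [if_neg h]
          push_neg at h
          have hVy : (V *ᵥ fun i : Fin k => if Fin.castLE hkn i = j then (1:ℝ) else 0)
              = u j := by
            funext r
            have h1 : (V *ᵥ fun i : Fin k => if Fin.castLE hkn i = j then (1:ℝ) else 0) r
                = ∑ i, V r i * (if i = (⟨(j:ℕ), h⟩ : Fin k) then (1:ℝ) else 0) := by
              simp only [Matrix.mulVec, dotProduct]
              refine Finset.sum_congr rfl fun i _ => ?_
              congr 1
              simp [Fin.ext_iff]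
            rw [h1]
            simp only [mul_ite, mul_one, mul_zero, Finset.sum_ite_eq', Finset.mem_univ,
              if_true]
            show u (Fin.castLE hkn ⟨(j:ℕ), h⟩) r = u j r
            rfl
          rw [hVy]
      have hfb : frobNorm (M - M*V*Vᵀ)^2
          = ∑ j, dotProduct ((M - M*V*Vᵀ) *ᵥ u j) ((M - M*V*Vᵀ) *ᵥ u j) := by
        rw [frob_sq]
        symm
        calc ∑ j, dotProduct ((M - M*V*Vᵀ) *ᵥ u j) ((M - M*V*Vᵀ) *ᵥ u j)
            = ∑ j, ∑ r, (dotProduct ((M - M*V*Vᵀ) r) (u j))^2 :=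
              Finset.sum_congr rfl fun j _ => mulVec_dot _ _
          _ = ∑ r, ∑ j, (dotProduct (v (e j)) ((M - M*V*Vᵀ) r))^2 := by
              rw [Finset.sum_comm]
              exact Finset.sum_congr rfl fun r _ => Finset.sum_congr rfl fun j _ => by
                rw [dotProduct_comm, hu]
          _ = ∑ r, ∑ j, (dotProduct (v j) ((M - M*V*Vᵀ) r))^2 := by
              refine Finset.sum_congr rfl fun r _ => ?_
              exact Equiv.sum_comp e (fun j => (dotProduct (v j) ((M - M*V*Vᵀ) r))^2)
          _ = ∑ r, dotProduct ((M - M*V*Vᵀ) r) ((M - M*V*Vᵀ) r) := by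
              refine Finset.sum_congr rfl fun r _ => ?_
              rw [← parseval ((M - M*V*Vᵀ) r) ((M - M*V*Vᵀ) r)]
              exact Finset.sum_congr rfl fun j _ => sq _
      rw [hfb]
      refine Finset.sum_congr rfl fun j _ => ?_
      rw [Matrix.sub_mulVec, hBu j]
      by_cases h : k ≤ (j:ℕ)
      · rw [if_pos h, if_pos h, sub_zero, hMx]
        have h2 : (Mᴴ * M) *ᵥ u j = lam (e j) • u j := hAv (e j)
        rw [h2, dotProduct_smul, smul_eq_mul]
        have h3 : dotProduct (u j) (u j) = 1 := by rw [huON]; simp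
        rw [h3, mul_one, hσsq j]
      · rw [if_neg h, if_neg h, sub_self]
        simp
end

section
/- Let p > 0 and q > 0 be real numbers and let σ(x) = 1/(1 + e^{−x}) be the sigmoid function. Then the per-pair skip-gram loss f(x) = −(p·ln σ(x) + q·ln σ(−x)) is strictly convex on ℝ, its derivative is f′(x) = −p + (p+q)·σ(x), and f attains its unique global minimum at the unique critical point x* = ln(p/q). In particular, with p = p_{ij} and q = λ·φ(Ê,j), the optimality condition f′(x) = 0 yields rᵢᵀc_j = ln(p_{ij}/(λ·φ(Ê,j))). -/
/-- For `p, q > 0` and the sigmoid `σ(x) = 1/(1 + e^{−x})`, the per-pair skip-gram loss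
`f(x) = −(p ln σ(x) + q ln σ(−x))` is strictly convex on `ℝ`, has derivative
`f′(x) = −p + (p+q) σ(x)`, has `x* = ln(p/q)` as its unique critical point, and attains its
unique global minimum there. -/
theorem skipgram_per_pair_loss_minimizer (p q : ℝ) (hp : 0 < p) (hq : 0 < q) :
    let sig : ℝ → ℝ := fun x => 1 / (1 + Real.exp (-x))
    let f : ℝ → ℝ := fun x => -(p * Real.log (sig x) + q * Real.log (sig (-x)))
    StrictConvexOn ℝ Set.univ f ∧
    (∀ x : ℝ, deriv f x = -p + (p + q) * sig x) ∧
    (∀ x : ℝ, deriv f x = 0 ↔ x = Real.log (p / q)) ∧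
    (∀ x : ℝ, x ≠ Real.log (p / q) → f (Real.log (p / q)) < f x) := by
  intro sig f
  have hpos : ∀ x : ℝ, 0 < 1 + Real.exp x := fun x => by positivity
  have hfeq : f = fun x => p * Real.log (1 + Real.exp (-x)) + q * Real.log (1 + Real.exp x) := by
    funext x
    simp only [f, sig, neg_neg, Real.log_div, Real.log_one]
    rw [Real.log_div one_ne_zero (hpos (-x)).ne', Real.log_div one_ne_zero (hpos x).ne']
    simp [Real.log_one]
    ring
  have hd : ∀ x : ℝ, HasDerivAt f (-p + (p + q) * sig x) x := by
    intro x
    have h1 : HasDerivAt (fun x : ℝ => 1 + Real.exp (-x)) (-Real.exp (-x)) x := by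
      simpa using ((Real.hasDerivAt_exp (-x)).comp x (hasDerivAt_neg x)).const_add 1
    have h2 : HasDerivAt (fun x : ℝ => 1 + Real.exp x) (Real.exp x) x :=
      (Real.hasDerivAt_exp x).const_add 1
    have hl1 := (h1.log (hpos (-x)).ne')
    have hl2 := (h2.log (hpos x).ne')
    have := ((hl1.const_mul p).add (hl2.const_mul q))
    rw [hfeq]
    refine this.congr_deriv ?_
    simp only [sig]
    have hx := (Real.exp_pos x).ne'
    have hnx := (Real.exp_pos (-x)).ne'
    rw [Real.exp_neg]
    field_simp
    ring
  have hderiv : ∀ x : ℝ, deriv f x = -p + (p + q) * sig x := fun x => (hd x).deriv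
  have hsigmono : StrictMono sig := by
    intro a b hab
    simp only [sig]
    rw [div_lt_div_iff₀ (hpos (-a)) (hpos (-b))]
    have := Real.exp_lt_exp.2 (neg_lt_neg hab)
    linarith
  have hdm : StrictMono (deriv f) := by
    intro a b hab
    rw [hderiv a, hderiv b]
    have := hsigmono hab
    have hpq : 0 < p + q := by linarith
    nlinarith
  have hdiff : ∀ x : ℝ, DifferentiableAt ℝ f x := fun x => (hd x).differentiableAt
  have hcont : Continuous f := continuous_iff_continuousAt.2 fun x => (hdiff x).continuousAt
  have hconv : StrictConvexOn ℝ Set.univ f := by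
    apply StrictMonoOn.strictConvexOn_of_deriv convex_univ
      hcont.continuousOn
    exact fun a _ b _ hab => hdm hab
  -- critical point
  have hstar : sig (Real.log (p / q)) = p / (p + q) := by
    simp only [sig]
    rw [Real.exp_neg, Real.exp_log (by positivity)]
    field_simp
  have hcrit : deriv f (Real.log (p / q)) = 0 := by
    rw [hderiv, hstar]
    field_simp
    ring
  have hiff : ∀ x : ℝ, deriv f x = 0 ↔ x = Real.log (p / q) := by
    intro x
    constructor
    · intro hx
      by_contra hne
      rcases lt_or_gt_of_ne hne with h | h
      · have := hdm h; rw [hx, hcrit] at this; exact lt_irrefl _ this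
      · have := hdm h; rw [hx, hcrit] at this; exact lt_irrefl _ this
    · intro hx; rw [hx]; exact hcrit
  refine ⟨hconv, hderiv, hiff, ?_⟩
  intro x hx
  set m := Real.log (p / q) with hm
  rcases lt_or_gt_of_ne hx with h | h
  · -- x < m : f strictly anti on Iic m
    have hanti : StrictAntiOn f (Set.Iic m) := by
      apply strictAntiOn_of_deriv_neg (convex_Iic m)
        hcont.continuousOn
      intro y hy
      rw [interior_Iic] at hy
      have := hdm hy
      rw [hcrit] at this
      linarith
    exact hanti (Set.mem_Iic.2 h.le) (Set.mem_Iic.2 le_rfl) h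
  · have hmono : StrictMonoOn f (Set.Ici m) := by
      apply strictMonoOn_of_deriv_pos (convex_Ici m)
        hcont.continuousOn
      intro y hy
      rw [interior_Ici] at hy
      have := hdm hy
      rw [hcrit] at this
      linarith
    exact hmono (Set.mem_Ici.2 le_rfl) (Set.mem_Ici.2 h.le) h
end

section
/- Let A be a real m×n matrix, let P be a real m×m orthogonal projection matrix (P² = P and Pᵀ = P), and let q ≥ 0 be an integer. Then the spectral norms satisfy ‖P A‖₂ ≤ ‖P (A Aᵀ)^q A‖₂^{1/(2q+1)}. In particular, the approximation error of a projection applied after q power iterations controls the error of the original scheme: an error within a factor c′ of the optimum for the powered matrix yields an error within c′^{1/(2q+1)} for A itself. -/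
open Matrix

/-- The spectral norm of a real matrix: the operator norm of the induced linear map between
Euclidean spaces, equivalently the largest singular value. -/
noncomputable def specNorm {a b : ℕ} (A : Matrix (Fin a) (Fin b) ℝ) : ℝ :=
  ‖LinearMap.toContinuousLinearMap (Matrix.toEuclideanLin A)‖

namespace PowerIterAux

open scoped RealInnerProductSpace Matrix.Norms.L2Operator

lemma specNorm_eq_l2 {a b : ℕ} (X : Matrix (Fin a) (Fin b) ℝ) : specNorm X = ‖X‖ := rfl

lemma specNorm_nonneg {a b : ℕ} (X : Matrix (Fin a) (Fin b) ℝ) : 0 ≤ specNorm X := by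
  rw [specNorm_eq_l2]; exact norm_nonneg _

lemma lin_mul_apply {a b c : ℕ} (X : Matrix (Fin a) (Fin b) ℝ)
    (Y : Matrix (Fin b) (Fin c) ℝ) (v : EuclideanSpace ℝ (Fin c)) :
    toEuclideanLin (X * Y) v = toEuclideanLin X (toEuclideanLin Y v) := by
  simp [toEuclideanLin_apply, mulVec_mulVec]

lemma lin_apply_le {a b : ℕ} (X : Matrix (Fin a) (Fin b) ℝ) (v : EuclideanSpace ℝ (Fin b)) :
    ‖toEuclideanLin X v‖ ≤ specNorm X * ‖v‖ :=
  (LinearMap.toContinuousLinearMap (toEuclideanLin X)).le_opNorm v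

lemma inner_transpose_left {a b : ℕ} (X : Matrix (Fin a) (Fin b) ℝ)
    (x : EuclideanSpace ℝ (Fin a)) (y : EuclideanSpace ℝ (Fin b)) :
    ⟪toEuclideanLin Xᵀ x, y⟫ = ⟪x, toEuclideanLin X y⟫ := by
  have h : toEuclideanLin Xᵀ = LinearMap.adjoint (toEuclideanLin X) := by
    rw [← X.conjTranspose_eq_transpose_of_trivial]
    exact Matrix.toEuclideanLin_conjTranspose_eq_adjoint X
  rw [h, LinearMap.adjoint_inner_left]

lemma specNorm_mul_transpose {a b : ℕ} (X : Matrix (Fin a) (Fin b) ℝ) :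
    specNorm (X * Xᵀ) = specNorm X ^ 2 := by
  rw [specNorm_eq_l2, specNorm_eq_l2, ← X.conjTranspose_eq_transpose_of_trivial]
  have h := Matrix.l2_opNorm_conjTranspose_mul_self Xᴴ
  rw [conjTranspose_conjTranspose] at h
  rw [h, Matrix.l2_opNorm_conjTranspose, sq]

/-- Jensen inequality for the quadratic form of a PSD hermitian matrix at a unit vector. -/
lemma quad_pow_le {m : ℕ} (M : Matrix (Fin m) (Fin m) ℝ) (hM : M.IsHermitian)
    (hpsd : ∀ x : EuclideanSpace ℝ (Fin m), 0 ≤ ⟪x, toEuclideanLin M x⟫)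
    (t : ℕ) (u : EuclideanSpace ℝ (Fin m)) (hu : ‖u‖ = 1) :
    ⟪u, toEuclideanLin M u⟫ ^ t ≤ ⟪u, toEuclideanLin (M ^ t) u⟫ := by
  have hsym : (toEuclideanLin M).IsSymmetric := (isHermitian_iff_isSymmetric).mp hM
  have hn : Module.finrank ℝ (EuclideanSpace ℝ (Fin m)) = m := finrank_euclideanSpace_fin
  set b := hsym.eigenvectorBasis hn with hb
  set μ := hsym.eigenvalues hn with hμdef
  have happly : ∀ i, toEuclideanLin M (b i) = μ i • b i := fun i => by
    rw [hb, hμdef]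
    simpa using hsym.apply_eigenvectorBasis hn i
  have hpow : ∀ (k : ℕ) (i : Fin m), toEuclideanLin (M ^ k) (b i) = (μ i ^ k) • b i := by
    intro k i
    induction k with
    | zero => simp [toEuclideanLin_apply]
    | succ k ih =>
      rw [pow_succ', lin_mul_apply, ih, _root_.map_smul, happly, smul_smul, ← pow_succ]
  have hbi : ∀ i, ⟪b i, b i⟫ = 1 := by
    intro i
    rw [real_inner_self_eq_norm_sq, b.orthonormal.1 i, one_pow]
  have hμ0 : ∀ i, 0 ≤ μ i := by
    intro i
    have h1 : ⟪b i, toEuclideanLin M (b i)⟫ = μ i := by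
      rw [happly, real_inner_smul_right, hbi, mul_one]
    have := hpsd (b i)
    rwa [h1] at this
  set w : Fin m → ℝ := fun i => ⟪u, b i⟫ ^ 2 with hwdef
  have hwsum : ∑ i, w i = 1 := by
    have h := b.sum_inner_mul_inner u u
    rw [real_inner_self_eq_norm_sq, hu, one_pow] at h
    rw [← h]
    refine Finset.sum_congr rfl fun i _ => ?_
    show ⟪u, b i⟫ ^ 2 = ⟪u, b i⟫ * ⟪b i, u⟫
    rw [real_inner_comm (b i) u]
    ring
  have hquad : ∀ k : ℕ, ⟪u, toEuclideanLin (M ^ k) u⟫ = ∑ i, w i * μ i ^ k := by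
    intro k
    have hsymk : (toEuclideanLin (M ^ k)).IsSymmetric := by
      refine (isHermitian_iff_isSymmetric).mp ?_
      rw [Matrix.IsHermitian, conjTranspose_pow, hM.eq]
    have h := b.sum_inner_mul_inner u (toEuclideanLin (M ^ k) u)
    rw [← h]
    refine Finset.sum_congr rfl fun i _ => ?_
    have : ⟪b i, toEuclideanLin (M ^ k) u⟫ = μ i ^ k * ⟪b i, u⟫ := by
      rw [← hsymk (b i) u, hpow, real_inner_smul_left]
    rw [this]
    show ⟪u, b i⟫ * (μ i ^ k * ⟪b i, u⟫) = ⟪u, b i⟫ ^ 2 * μ i ^ k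
    rw [real_inner_comm (b i) u]
    ring
  have h1 : ⟪u, toEuclideanLin M u⟫ = ∑ i, w i * μ i := by
    have := hquad 1
    rwa [pow_one, (by funext i; rw [pow_one] : (fun i => w i * μ i ^ 1) = fun i => w i * μ i)] at this
  have hjensen : (∑ i, w i * μ i) ^ t ≤ ∑ i, w i * μ i ^ t := by
    have hw0 : ∀ i ∈ Finset.univ, (0:ℝ) ≤ w i := fun i _ => sq_nonneg _
    have hmem : ∀ i ∈ Finset.univ, μ i ∈ Set.Ici (0:ℝ) := fun i _ => hμ0 i
    have := (convexOn_pow t).map_sum_le hw0 hwsum hmem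
    simpa [smul_eq_mul] using this
  rw [h1, hquad t]
  exact hjensen

end PowerIterAux

open PowerIterAux
open scoped RealInnerProductSpace

/-- Power-iteration bound: if `P` is an orthogonal projection (`P² = P`, `Pᵀ = P`) and
`q ≥ 0`, then `‖P A‖₂ ≤ ‖P (A Aᵀ)^q A‖₂^{1/(2q+1)}`. -/
theorem power_iteration_spectral_bound
    (m n : ℕ) (A : Matrix (Fin m) (Fin n) ℝ) (P : Matrix (Fin m) (Fin m) ℝ)
    (hP2 : P * P = P) (hPt : Pᵀ = P) (q : ℕ) :
    specNorm (P * A) ≤ specNorm (P * (A * Aᵀ) ^ q * A) ^ ((1 : ℝ) / (2 * (q : ℝ) + 1)) := by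
  classical
  set M : Matrix (Fin m) (Fin m) ℝ := A * Aᵀ with hMdef
  set t : ℕ := 2 * q + 1 with ht
  set B : Matrix (Fin m) (Fin n) ℝ := P * M ^ q * A with hBdef
  have htR : ((t : ℕ) : ℝ) = 2 * (q : ℝ) + 1 := by rw [ht]; push_cast; ring
  have hMt : Mᵀ = M := by rw [hMdef, transpose_mul, transpose_transpose]
  have hMh : M.IsHermitian := by
    rw [Matrix.IsHermitian, conjTranspose_eq_transpose_of_trivial, hMt]
  have hpsd : ∀ x : EuclideanSpace ℝ (Fin m), 0 ≤ ⟪x, toEuclideanLin M x⟫ := by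
    intro x
    have h1 : toEuclideanLin M x = toEuclideanLin A (toEuclideanLin Aᵀ x) := by
      rw [hMdef]; exact lin_mul_apply A Aᵀ x
    rw [h1, ← inner_transpose_left, real_inner_self_eq_norm_sq]
    positivity
  have hBnn : 0 ≤ specNorm B := specNorm_nonneg B
  set c : ℝ := specNorm B ^ ((1 : ℝ) / (t : ℝ)) with hc
  have hcnn : 0 ≤ c := Real.rpow_nonneg hBnn _
  -- inner product bound at a unit vector fixed by P
  have hPinner : ∀ (x y : EuclideanSpace ℝ (Fin m)),
      ⟪toEuclideanLin P x, y⟫ = ⟪x, toEuclideanLin P y⟫ := by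
    intro x y
    have h := inner_transpose_left P x y
    rwa [hPt] at h
  have hBB : P * M ^ t * P = B * Bᵀ := by
    have h1 : Bᵀ = Aᵀ * (M ^ q * P) := by
      rw [hBdef, transpose_mul, transpose_mul, transpose_pow, hMt, hPt]
    have h2 : M ^ t = M ^ q * (M * M ^ q) := by
      rw [ht, ← pow_succ', ← pow_add]
      congr 1
      omega
    rw [h1, h2, hBdef, hMdef]
    simp only [Matrix.mul_assoc]
  have hkey : ∀ u : EuclideanSpace ℝ (Fin m), ‖u‖ = 1 → toEuclideanLin P u = u →
      ⟪u, toEuclideanLin (M ^ t) u⟫ ≤ specNorm B ^ 2 := by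
    intro u hu hPu
    have e : ⟪u, toEuclideanLin (M ^ t) u⟫ = ⟪u, toEuclideanLin (P * M ^ t * P) u⟫ := by
      rw [lin_mul_apply (P * M ^ t) P, lin_mul_apply P (M ^ t), hPu, ← hPinner, hPu]
    rw [e, hBB]
    calc ⟪u, toEuclideanLin (B * Bᵀ) u⟫
        ≤ ‖u‖ * ‖toEuclideanLin (B * Bᵀ) u‖ := real_inner_le_norm _ _
      _ ≤ ‖u‖ * (specNorm (B * Bᵀ) * ‖u‖) := by
          have := lin_apply_le (B * Bᵀ) u
          exact mul_le_mul_of_nonneg_left this (norm_nonneg u)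
      _ = specNorm (B * Bᵀ) := by rw [hu]; ring
      _ = specNorm B ^ 2 := specNorm_mul_transpose B
  -- the operator norm bound
  have main : specNorm (P * A) ≤ c := by
    refine ContinuousLinearMap.opNorm_le_bound _ hcnn fun x => ?_
    show ‖toEuclideanLin (P * A) x‖ ≤ c * ‖x‖
    set w := toEuclideanLin (P * A) x with hw
    by_cases hw0 : w = 0
    · rw [hw0, norm_zero]
      positivity
    · have hwnorm : 0 < ‖w‖ := norm_pos_iff.mpr hw0
      have hPw : toEuclideanLin P w = w := by
        rw [hw, ← lin_mul_apply, ← Matrix.mul_assoc, hP2]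
      set u : EuclideanSpace ℝ (Fin m) := ‖w‖⁻¹ • w with hudef
      have hu : ‖u‖ = 1 := norm_smul_inv_norm hw0
      have hPu : toEuclideanLin P u = u := by rw [hudef, _root_.map_smul, hPw]
      have hwu : w = ‖w‖ • u := by
        rw [hudef, smul_smul, mul_inv_cancel₀ (ne_of_gt hwnorm), one_smul]
      set ρ : ℝ := ⟪u, toEuclideanLin M u⟫ with hρ
      have hρ0 : 0 ≤ ρ := hpsd u
      -- Step 1
      have h1 : ‖w‖ ^ 2 ≤ ‖toEuclideanLin Aᵀ w‖ * ‖x‖ := by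
        have e1 : ⟪w, w⟫ = ⟪toEuclideanLin Aᵀ w, x⟫ := by
          calc ⟪w, w⟫ = ⟪w, toEuclideanLin P (toEuclideanLin A x)⟫ := by
                rw [← lin_mul_apply, ← hw]
            _ = ⟪toEuclideanLin P w, toEuclideanLin A x⟫ := (hPinner _ _).symm
            _ = ⟪w, toEuclideanLin A x⟫ := by rw [hPw]
            _ = ⟪toEuclideanLin Aᵀ w, x⟫ := (inner_transpose_left A w x).symm
        rw [← real_inner_self_eq_norm_sq, e1]
        exact real_inner_le_norm _ _
      -- Step 2
      have h2 : ‖toEuclideanLin Aᵀ w‖ ^ 2 = ‖w‖ ^ 2 * ρ := by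
        have e2 : ⟪toEuclideanLin Aᵀ w, toEuclideanLin Aᵀ w⟫ = ⟪w, toEuclideanLin M w⟫ := by
          rw [inner_transpose_left, hMdef, lin_mul_apply]
        rw [← real_inner_self_eq_norm_sq, e2]
        conv_lhs => rw [hwu]
        rw [_root_.map_smul, real_inner_smul_left, real_inner_smul_right, hρ]
        ring
      -- combine
      have h3 : ‖w‖ ^ 2 ≤ ρ * ‖x‖ ^ 2 := by
        have hsq : (‖w‖ ^ 2) ^ 2 ≤ (‖toEuclideanLin Aᵀ w‖ * ‖x‖) ^ 2 :=
          pow_le_pow_left₀ (sq_nonneg _) h1 2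
        rw [mul_pow, h2] at hsq
        have hpos : (0:ℝ) < ‖w‖ ^ 2 := by positivity
        nlinarith [hsq, hpos]
      have h4 : (‖w‖ ^ 2) ^ t ≤ specNorm B ^ 2 * (‖x‖ ^ 2) ^ t := by
        calc (‖w‖ ^ 2) ^ t ≤ (ρ * ‖x‖ ^ 2) ^ t := pow_le_pow_left₀ (sq_nonneg _) h3 t
          _ = ρ ^ t * (‖x‖ ^ 2) ^ t := mul_pow _ _ _
          _ ≤ ⟪u, toEuclideanLin (M ^ t) u⟫ * (‖x‖ ^ 2) ^ t := by
              have := quad_pow_le M hMh hpsd t u hu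
              exact mul_le_mul_of_nonneg_right this (by positivity)
          _ ≤ specNorm B ^ 2 * (‖x‖ ^ 2) ^ t := by
              have := hkey u hu hPu
              exact mul_le_mul_of_nonneg_right this (by positivity)
      have htne : (t : ℝ) ≠ 0 := by rw [ht]; push_cast; positivity
      have hc2t : c ^ (2 * t) = specNorm B ^ 2 := by
        rw [hc, ← Real.rpow_natCast (specNorm B ^ ((1 : ℝ) / (t : ℝ))) (2 * t),
          ← Real.rpow_mul hBnn]
        have : (1 : ℝ) / (t : ℝ) * ((2 * t : ℕ) : ℝ) = 2 := by
          push_cast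
          field_simp
        rw [this]
        rw [show (2 : ℝ) = ((2 : ℕ) : ℝ) by norm_num, Real.rpow_natCast]
      have hfinal : ‖w‖ ^ (2 * t) ≤ (c * ‖x‖) ^ (2 * t) := by
        calc ‖w‖ ^ (2 * t) = (‖w‖ ^ 2) ^ t := by rw [pow_mul]
          _ ≤ specNorm B ^ 2 * (‖x‖ ^ 2) ^ t := h4
          _ = c ^ (2 * t) * ‖x‖ ^ (2 * t) := by rw [hc2t, pow_mul]
          _ = (c * ‖x‖) ^ (2 * t) := (mul_pow _ _ _).symm
      exact le_of_pow_le_pow_left₀ (by omega) (by positivity) hfinal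
  calc specNorm (P * A) ≤ c := main
    _ = specNorm B ^ ((1 : ℝ) / (2 * (q : ℝ) + 1)) := by rw [hc, htR]
end
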